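/- Let (V, σ) be an infinite-dimensional real symplectic vector space containing an infinite sequence of pairwise symplectically orthogonal symplectic planes. Then every finitely additive probability measure μ on the subspace lattice of V with symplectic complementation vanishes on all finite-dimensional subspaces. Consequently, if V is a separable infinite-dimensional complex Hilbert space with σ = Im⟨·,·⟩, no countably additive probability measure exists on the lattice of closed real subspaces with symplectic complementation. -/

import Mathlib

/-- The symplectic complement of a subspace with respect to a bilinear form. -/
def sC {V : Type*} [AddCommGroup V] [Module ℝ V] (σ : V →ₗ[ℝ] V →ₗ[ℝ] ℝ)
    (A : Submodule ℝ V) : Submodule ℝ V where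
  carrier := {v | ∀ a ∈ A, σ v a = 0}
  add_mem' := by
    intro x y hx hy a ha
    simp [map_add, LinearMap.add_apply, hx a ha, hy a ha]
  zero_mem' := by
    intro a ha
    simp
  smul_mem' := by
    intro r x hx a ha
    simp [map_smul, LinearMap.smul_apply, hx a ha]

/-- The symplectic complement of a real-linear subspace of a complex Hilbert space,
with respect to the symplectic form `Im⟨·,·⟩`. -/
def sympSub {H : Type*} [NormedAddCommGroup H] [InnerProductSpace ℂ H]
    (K : Submodule ℝ H) : Submodule ℝ H where
  carrier := {ξ | ∀ h ∈ K, (inner ℂ ξ h : ℂ).im = 0}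
  add_mem' := by
    intro x y hx hy h hh
    rw [inner_add_left]
    simp [hx h hh, hy h hh]
  zero_mem' := by
    intro h hh
    simp
  smul_mem' := by
    intro r x hx h hh
    rw [← Complex.coe_smul, inner_smul_left]
    simp [hx h hh]

open Module Submodule

section Aux

variable {V : Type*} [AddCommGroup V] [Module ℝ V] (σ : V →ₗ[ℝ] V →ₗ[ℝ] ℝ)

lemma aux_mem_sC {A : Submodule ℝ V} {v : V} : v ∈ sC σ A ↔ ∀ a ∈ A, σ v a = 0 := Iff.rfl

lemma aux_skew (halt : ∀ v, σ v v = 0) (x y : V) : σ x y = - σ y x := by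
  have h := halt (x + y)
  simp only [map_add, LinearMap.add_apply, halt] at h
  linarith

lemma aux_le_sC_span {S T : Set V} (h : ∀ a ∈ S, ∀ b ∈ T, σ a b = 0) :
    span ℝ S ≤ sC σ (span ℝ T) := by
  rw [span_le]
  intro a ha
  show ∀ b ∈ span ℝ T, σ a b = 0
  have : span ℝ T ≤ LinearMap.ker (σ a) := by
    rw [span_le]
    intro b hb
    exact h a ha b hb
  intro b hb
  exact this hb

lemma aux_span_pair_smul {t : ℝ} (ht : t ≠ 0) (a b : V) :
    span ℝ ({a, t • b} : Set V) = span ℝ ({a, b} : Set V) := by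
  apply le_antisymm <;> rw [span_le] <;> rintro z (rfl | rfl)
  · exact subset_span (Set.mem_insert _ _)
  · exact smul_mem _ t (subset_span (Set.mem_insert_of_mem _ rfl))
  · exact subset_span (Set.mem_insert _ _)
  · have hmem : t • z ∈ span ℝ ({a, t • z} : Set V) :=
      subset_span (Set.mem_insert_of_mem _ rfl)
    have h2 := smul_mem _ t⁻¹ hmem
    rwa [smul_smul, inv_mul_cancel₀ ht, one_smul] at h2

end Aux

section Mu

variable {V : Type*} [AddCommGroup V] [Module ℝ V]

lemma aux_iso_zero (σ : V →ₗ[ℝ] V →ₗ[ℝ] ℝ) (μ : Submodule ℝ V → ℝ)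
    (hadd : ∀ A B : Submodule ℝ V, FiniteDimensional ℝ A → FiniteDimensional ℝ B →
      A ≤ sC σ B → μ (A ⊔ B) = μ A + μ B)
    (A : Submodule ℝ V) (hA : FiniteDimensional ℝ A) (h : A ≤ sC σ A) :
    μ A = 0 := by
  have := hadd A A hA hA h
  rw [sup_idem] at this
  linarith

lemma aux_mu_bot (σ : V →ₗ[ℝ] V →ₗ[ℝ] ℝ) (μ : Submodule ℝ V → ℝ)
    (hadd : ∀ A B : Submodule ℝ V, FiniteDimensional ℝ A → FiniteDimensional ℝ B →
      A ≤ sC σ B → μ (A ⊔ B) = μ A + μ B) : μ ⊥ = 0 :=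
  aux_iso_zero σ μ hadd ⊥ inferInstance bot_le

lemma aux_muLE (σ : V →ₗ[ℝ] V →ₗ[ℝ] ℝ) (halt : ∀ v, σ v v = 0) (μ : Submodule ℝ V → ℝ)
    (hadd : ∀ A B : Submodule ℝ V, FiniteDimensional ℝ A → FiniteDimensional ℝ B →
      A ≤ sC σ B → μ (A ⊔ B) = μ A + μ B)
    (hmono : ∀ A B : Submodule ℝ V, FiniteDimensional ℝ A → FiniteDimensional ℝ B →
      A ≤ B → μ A ≤ μ B)
    (e f u v : V) (h1 : σ u e = 0) (h2 : σ u f = 0) (h3 : σ v e = 0)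
    (h4 : σ v f = 0) (h5 : σ u v = 0) :
    μ (span ℝ ({e, f} : Set V)) ≤ μ (span ℝ ({e + u, f + v} : Set V)) := by
  have hs := aux_skew σ halt
  set A := span ℝ ({e + u, f + v} : Set V) with hAdef
  set B := span ℝ ({u, v} : Set V) with hBdef
  haveI : FiniteDimensional ℝ A := FiniteDimensional.span_of_finite ℝ (Set.toFinite _)
  haveI : FiniteDimensional ℝ B := FiniteDimensional.span_of_finite ℝ (Set.toFinite _)
  haveI : FiniteDimensional ℝ (span ℝ ({e, f} : Set V)) :=
    FiniteDimensional.span_of_finite ℝ (Set.toFinite _)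
  have hvu : σ v u = 0 := by rw [hs v u, h5, neg_zero]
  have hBiso : B ≤ sC σ B := by
    apply aux_le_sC_span
    rintro a (rfl | rfl) b (rfl | rfl)
    all_goals first
      | exact halt _
      | exact h5
      | exact hvu
  have hμB : μ B = 0 := aux_iso_zero σ μ hadd B inferInstance hBiso
  have hAB : A ≤ sC σ B := by
    apply aux_le_sC_span
    have c1 : σ (e + u) u = 0 := by
      simp only [map_add, LinearMap.add_apply, halt, hs e u, h1, neg_zero, add_zero]
    have c2 : σ (e + u) v = 0 := by
      simp only [map_add, LinearMap.add_apply, hs e v, h3, h5, neg_zero, add_zero]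
    have c3 : σ (f + v) u = 0 := by
      simp only [map_add, LinearMap.add_apply, hs f u, h2, hvu, neg_zero, add_zero]
    have c4 : σ (f + v) v = 0 := by
      simp only [map_add, LinearMap.add_apply, halt, hs f v, h4, neg_zero, add_zero]
    rintro a (rfl | rfl) b (rfl | rfl)
    all_goals first | exact c1 | exact c2 | exact c3 | exact c4
  have hsub : span ℝ ({e, f} : Set V) ≤ A ⊔ B := by
    rw [span_le]
    rintro z (rfl | rfl)
    · have hz : z = (z + u) + (-u) := by abel
      rw [hz]
      exact add_mem_sup (subset_span (Set.mem_insert _ _))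
        (neg_mem (subset_span (Set.mem_insert _ _)))
    · have hz : z = (z + v) + (-v) := by abel
      rw [hz]
      exact add_mem_sup (subset_span (Set.mem_insert_of_mem _ rfl))
        (neg_mem (subset_span (Set.mem_insert_of_mem _ rfl)))
  calc μ (span ℝ ({e, f} : Set V)) ≤ μ (A ⊔ B) :=
        hmono _ _ inferInstance inferInstance hsub
    _ = μ A + μ B := hadd A B inferInstance inferInstance hAB
    _ = μ A := by rw [hμB, add_zero]

lemma aux_muEQmove (σ : V →ₗ[ℝ] V →ₗ[ℝ] ℝ) (halt : ∀ v, σ v v = 0) (μ : Submodule ℝ V → ℝ)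
    (hadd : ∀ A B : Submodule ℝ V, FiniteDimensional ℝ A → FiniteDimensional ℝ B →
      A ≤ sC σ B → μ (A ⊔ B) = μ A + μ B)
    (hmono : ∀ A B : Submodule ℝ V, FiniteDimensional ℝ A → FiniteDimensional ℝ B →
      A ≤ B → μ A ≤ μ B)
    (e f u v : V) (h1 : σ u e = 0) (h2 : σ u f = 0) (h3 : σ v e = 0)
    (h4 : σ v f = 0) (h5 : σ u v = 0) :
    μ (span ℝ ({e, f} : Set V)) = μ (span ℝ ({e + u, f + v} : Set V)) := by
  have hs := aux_skew σ halt
  apply le_antisymm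
  · exact aux_muLE σ halt μ hadd hmono e f u v h1 h2 h3 h4 h5
  · have hvu : σ v u = 0 := by rw [hs v u, h5, neg_zero]
    have key := aux_muLE σ halt μ hadd hmono (e + u) (f + v) (-u) (-v)
      (by simp only [map_neg, LinearMap.neg_apply, map_add, LinearMap.add_apply, h1, halt,
        add_zero, neg_zero])
      (by simp only [map_neg, LinearMap.neg_apply, map_add, LinearMap.add_apply, h2, h5,
        add_zero, neg_zero])
      (by simp only [map_neg, LinearMap.neg_apply, map_add, LinearMap.add_apply, h3, hvu,
        add_zero, neg_zero])
      (by simp only [map_neg, LinearMap.neg_apply, map_add, LinearMap.add_apply, h4, halt,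
        add_zero, neg_zero])
      (by simp only [map_neg, LinearMap.neg_apply, LinearMap.map_neg, h5, neg_zero, neg_neg])
    simpa only [add_neg_cancel_right] using key

end Mu

lemma aux_muEQ {V : Type*} [AddCommGroup V] [Module ℝ V]
    (σ : V →ₗ[ℝ] V →ₗ[ℝ] ℝ) (halt : ∀ v, σ v v = 0) (μ : Submodule ℝ V → ℝ)
    (hadd : ∀ A B : Submodule ℝ V, FiniteDimensional ℝ A → FiniteDimensional ℝ B →
      A ≤ sC σ B → μ (A ⊔ B) = μ A + μ B)
    (hmono : ∀ A B : Submodule ℝ V, FiniteDimensional ℝ A → FiniteDimensional ℝ B →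
      A ≤ B → μ A ≤ μ B)
    (e f e' f' : V) (hs0 : σ e f ≠ 0) (hc0 : σ e' f' ≠ 0)
    (h1 : σ e' e = 0) (h2 : σ e' f = 0) (h3 : σ f' e = 0) (h4 : σ f' f = 0) :
    μ (span ℝ ({e, f} : Set V)) = μ (span ℝ ({e', f'} : Set V)) := by
  have hs := aux_skew σ halt
  set s := σ e f with hsdef
  set c := σ e' f' with hcdef
  set t := s / c with htdef
  have ht0 : t ≠ 0 := div_ne_zero hs0 hc0
  -- move 1 : span {e, f} = span {e + e', f}
  have m1 : μ (span ℝ ({e, f} : Set V)) = μ (span ℝ ({e + e', f} : Set V)) := by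
    have key := aux_muEQmove σ halt μ hadd hmono e f e' 0 h1 h2
      (by simp) (by simp) (by simp)
    simpa only [add_zero] using key
  -- move 2 : span {e + e', f} = span {e + e', t • f'}
  have m2 : μ (span ℝ ({e + e', f} : Set V)) = μ (span ℝ ({e + e', t • f'} : Set V)) := by
    have key := aux_muEQmove σ halt μ hadd hmono (e + e') f 0 (t • f' - f)
      (by simp) (by simp)
      (by
        simp only [map_sub, map_smul, LinearMap.sub_apply, LinearMap.smul_apply, map_add,
          LinearMap.add_apply, smul_eq_mul]
        rw [h3, hs f e, hs f' e', hs f e', h2, ← hsdef, ← hcdef, htdef]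
        field_simp
        ring)
      (by
        simp only [map_sub, map_smul, LinearMap.sub_apply, LinearMap.smul_apply, smul_eq_mul,
          h4, halt, mul_zero, sub_zero])
      (by simp)
    have heq : f + (t • f' - f) = t • f' := by abel
    rw [heq] at key
    simpa only [add_zero] using key
  -- move 3 : span {e + e', t • f'} = span {e', t • f'}
  have m3 : μ (span ℝ ({e + e', t • f'} : Set V)) = μ (span ℝ ({e', t • f'} : Set V)) := by
    have key := aux_muEQmove σ halt μ hadd hmono (e + e') (t • f') (-e) 0
      (by
        simp only [map_neg, LinearMap.neg_apply, map_add, LinearMap.add_apply, halt]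
        rw [hs e e', h1]
        simp)
      (by
        simp only [map_neg, LinearMap.neg_apply, LinearMap.map_smul, smul_eq_mul]
        rw [hs e f', h3]
        simp)
      (by simp) (by simp) (by simp)
    have heq : e + e' + -e = e' := by abel
    rw [heq] at key
    simpa only [add_zero] using key
  rw [m1, m2, m3, aux_span_pair_smul ht0]

lemma aux_finrank_span_pair_le {E : Type*} [NormedAddCommGroup E] [InnerProductSpace ℝ E]
    (a b : E) : finrank ℝ (span ℝ ({a, b} : Set E)) ≤ 2 := by
  have h : span ℝ ({a, b} : Set E) = (ℝ ∙ a) ⊔ (ℝ ∙ b) := by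
    rw [Submodule.span_insert]
  rw [h]
  haveI : FiniteDimensional ℝ (ℝ ∙ a) := FiniteDimensional.span_of_finite ℝ (Set.toFinite _)
  haveI : FiniteDimensional ℝ (ℝ ∙ b) := FiniteDimensional.span_of_finite ℝ (Set.toFinite _)
  have h2 := Submodule.finrank_sup_add_finrank_inf_eq (ℝ ∙ a) (ℝ ∙ b)
  have ha : finrank ℝ (ℝ ∙ a) ≤ 1 := by
    rcases eq_or_ne a 0 with rfl | hne
    · rw [Submodule.span_zero_singleton]
      simp
    · rw [finrank_span_singleton hne]
  have hb : finrank ℝ (ℝ ∙ b) ≤ 1 := by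
    rcases eq_or_ne b 0 with rfl | hne
    · rw [Submodule.span_zero_singleton]
      simp
    · rw [finrank_span_singleton hne]
  omega

lemma aux_euclid5 (v₁ v₂ w₁ w₂ : EuclideanSpace ℝ (Fin 5)) :
    ∃ a b : EuclideanSpace ℝ (Fin 5),
      (inner ℝ a v₁ : ℝ) = 0 ∧ (inner ℝ a v₂ : ℝ) = 0 ∧ (inner ℝ b w₁ : ℝ) = 0 ∧
      (inner ℝ b w₂ : ℝ) = 0 ∧ (inner ℝ a b : ℝ) ≠ 0 := by
  classical
  by_contra hcon
  push_neg at hcon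
  set A := (span ℝ ({v₁, v₂} : Set (EuclideanSpace ℝ (Fin 5))))ᗮ with hA
  set B := (span ℝ ({w₁, w₂} : Set (EuclideanSpace ℝ (Fin 5))))ᗮ with hB
  have hBA : B ≤ Aᗮ := by
    intro b hb
    rw [Submodule.mem_orthogonal]
    intro a ha
    have ha1 : (inner ℝ a v₁ : ℝ) = 0 := by
      have := (Submodule.mem_orthogonal _ a).mp ha v₁ (subset_span (Set.mem_insert _ _))
      rwa [real_inner_comm] at this
    have ha2 : (inner ℝ a v₂ : ℝ) = 0 := by
      have := (Submodule.mem_orthogonal _ a).mp ha v₂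
        (subset_span (Set.mem_insert_of_mem _ rfl))
      rwa [real_inner_comm] at this
    have hb1 : (inner ℝ b w₁ : ℝ) = 0 := by
      have := (Submodule.mem_orthogonal _ b).mp hb w₁ (subset_span (Set.mem_insert _ _))
      rwa [real_inner_comm] at this
    have hb2 : (inner ℝ b w₂ : ℝ) = 0 := by
      have := (Submodule.mem_orthogonal _ b).mp hb w₂
        (subset_span (Set.mem_insert_of_mem _ rfl))
      rwa [real_inner_comm] at this
    exact hcon a b ha1 ha2 hb1 hb2
  have hdim : finrank ℝ (EuclideanSpace ℝ (Fin 5)) = 5 := finrank_euclideanSpace_fin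
  have h1 := (span ℝ ({v₁, v₂} : Set (EuclideanSpace ℝ (Fin 5)))).finrank_add_finrank_orthogonal
  have h2 := (span ℝ ({w₁, w₂} : Set (EuclideanSpace ℝ (Fin 5)))).finrank_add_finrank_orthogonal
  have h3 := A.finrank_add_finrank_orthogonal
  have h4 : finrank ℝ B ≤ finrank ℝ Aᗮ := Submodule.finrank_mono hBA
  have h5 := aux_finrank_span_pair_le v₁ v₂
  have h6 := aux_finrank_span_pair_le w₁ w₂
  rw [hdim] at h1 h2 h3
  rw [← hA] at h1
  rw [← hB] at h2
  omega

lemma aux_muPlane {V : Type*} [AddCommGroup V] [Module ℝ V]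
    (σ : V →ₗ[ℝ] V →ₗ[ℝ] ℝ) (halt : ∀ v, σ v v = 0) (μ : Submodule ℝ V → ℝ)
    (hpos : ∀ A : Submodule ℝ V, 0 ≤ μ A)
    (hone : ∀ A : Submodule ℝ V, FiniteDimensional ℝ A → μ A ≤ 1)
    (hadd : ∀ A B : Submodule ℝ V, FiniteDimensional ℝ A → FiniteDimensional ℝ B →
      A ≤ sC σ B → μ (A ⊔ B) = μ A + μ B)
    (hmono : ∀ A B : Submodule ℝ V, FiniteDimensional ℝ A → FiniteDimensional ℝ B →
      A ≤ B → μ A ≤ μ B)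
    (x y : ℕ → V) (hxy1 : ∀ n, σ (x n) (y n) = 1)
    (horth : ∀ n m, n ≠ m → σ (x n) (x m) = 0 ∧ σ (x n) (y m) = 0 ∧
      σ (y n) (x m) = 0 ∧ σ (y n) (y m) = 0)
    (e f : V) (hef : σ e f ≠ 0) : μ (span ℝ ({e, f} : Set V)) = 0 := by
  classical
  obtain ⟨a, b, ha1, ha2, hb1, hb2, hab⟩ := aux_euclid5
    (WithLp.toLp 2 fun i => σ (x (i : ℕ)) e) (WithLp.toLp 2 fun i => σ (x (i : ℕ)) f)
    (WithLp.toLp 2 fun i => σ (y (i : ℕ)) e) (WithLp.toLp 2 fun i => σ (y (i : ℕ)) f)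
  simp only [PiLp.inner_apply, RCLike.inner_apply, conj_trivial] at ha1 ha2 hb1 hb2 hab
  set w : V := ∑ i : Fin 5, a i • x (i : ℕ) with hw
  set w' : V := ∑ i : Fin 5, b i • y (i : ℕ) with hw'
  have hσw : ∀ z : V, σ w z = ∑ i : Fin 5, a i * σ (x (i : ℕ)) z := by
    intro z
    rw [hw, map_sum, LinearMap.sum_apply]
    exact Finset.sum_congr rfl fun i _ => by
      rw [map_smul, LinearMap.smul_apply, smul_eq_mul]
  have hσw' : ∀ z : V, σ w' z = ∑ i : Fin 5, b i * σ (y (i : ℕ)) z := by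
    intro z
    rw [hw', map_sum, LinearMap.sum_apply]
    exact Finset.sum_congr rfl fun i _ => by
      rw [map_smul, LinearMap.smul_apply, smul_eq_mul]
  have hwe : σ w e = 0 := by rw [hσw]; simpa only [mul_comm] using ha1
  have hwf : σ w f = 0 := by rw [hσw]; simpa only [mul_comm] using ha2
  have hw'e : σ w' e = 0 := by rw [hσw']; simpa only [mul_comm] using hb1
  have hw'f : σ w' f = 0 := by rw [hσw']; simpa only [mul_comm] using hb2
  have hww' : σ w w' ≠ 0 := by
    have : σ w w' = ∑ i : Fin 5, a i * b i := by
      rw [hσw]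
      have : ∀ i : Fin 5, σ (x (i : ℕ)) w' = b i := by
        intro i
        rw [hw', map_sum]
        rw [Finset.sum_eq_single i]
        · rw [map_smul, smul_eq_mul, hxy1, mul_one]
        · intro j _ hj
          rw [map_smul, smul_eq_mul,
            (horth (i : ℕ) (j : ℕ) (fun hc => hj (Fin.val_injective hc).symm)).2.1, mul_zero]
        · intro hi
          exact absurd (Finset.mem_univ i) hi
      exact Finset.sum_congr rfl fun i _ => by rw [this i]
    rw [this]
    simpa only [mul_comm] using hab
  -- orthogonality of w, w' to the planes with index ≥ 5
  have hw5 : ∀ n, 5 ≤ n → σ w (x n) = 0 ∧ σ w (y n) = 0 ∧ σ w' (x n) = 0 ∧ σ w' (y n) = 0 := by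
    intro n hn
    have hne : ∀ i : Fin 5, (i : ℕ) ≠ n := by
      intro i hi
      have := i.isLt
      omega
    refine ⟨?_, ?_, ?_, ?_⟩ <;> [rw [hσw]; rw [hσw]; rw [hσw']; rw [hσw']] <;>
      refine Finset.sum_eq_zero fun i _ => ?_
    · rw [(horth _ _ (hne i)).1, mul_zero]
    · rw [(horth _ _ (hne i)).2.1, mul_zero]
    · rw [(horth _ _ (hne i)).2.2.1, mul_zero]
    · rw [(horth _ _ (hne i)).2.2.2, mul_zero]
  set q := μ (span ℝ ({w, w'} : Set V)) with hq
  have hq1 : μ (span ℝ ({e, f} : Set V)) = q :=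
    aux_muEQ σ halt μ hadd hmono e f w w' hef hww' hwe hwf hw'e hw'f
  have hq2 : ∀ n, 5 ≤ n → μ (span ℝ ({x n, y n} : Set V)) = q := by
    intro n hn
    obtain ⟨c1, c2, c3, c4⟩ := hw5 n hn
    exact aux_muEQ σ halt μ hadd hmono (x n) (y n) w w'
      (by rw [hxy1]; exact one_ne_zero) hww' c1 c2 c3 c4
  -- the joins of the planes with index ≥ 5
  set J : ℕ → Submodule ℝ V :=
    fun N => (Finset.range N).sup (fun m => span ℝ ({x (m + 5), y (m + 5)} : Set V)) with hJ
  have hJsucc : ∀ N, J (N + 1) = J N ⊔ span ℝ ({x (N + 5), y (N + 5)} : Set V) := by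
    intro N
    rw [hJ]
    simp only [Finset.range_add_one, Finset.sup_insert]
    rw [sup_comm]
  have finJ : ∀ N, FiniteDimensional ℝ (J N) := by
    intro N
    induction N with
    | zero => rw [hJ]; simp only [Finset.range_zero, Finset.sup_empty]; exact (inferInstance : FiniteDimensional ℝ (⊥ : Submodule ℝ V))
    | succ N ih =>
      rw [hJsucc N]
      haveI := ih
      haveI : FiniteDimensional ℝ (span ℝ ({x (N + 5), y (N + 5)} : Set V)) :=
        FiniteDimensional.span_of_finite ℝ (Set.toFinite _)
      infer_instance
  have hJle : ∀ N, J N ≤ sC σ (span ℝ ({x (N + 5), y (N + 5)} : Set V)) := by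
    intro N
    apply Finset.sup_le
    intro m hm
    have hne : m + 5 ≠ N + 5 := by
      have := Finset.mem_range.mp hm
      omega
    apply aux_le_sC_span
    rintro p (rfl | rfl) r (rfl | rfl)
    · exact (horth _ _ hne).1
    · exact (horth _ _ hne).2.1
    · exact (horth _ _ hne).2.2.1
    · exact (horth _ _ hne).2.2.2
  have hJmu : ∀ N, μ (J N) = N * q := by
    intro N
    induction N with
    | zero =>
      rw [hJ]
      simp only [Finset.range_zero, Finset.sup_empty, Nat.cast_zero, zero_mul]
      exact aux_mu_bot σ μ hadd
    | succ N ih =>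
      haveI := finJ N
      haveI : FiniteDimensional ℝ (span ℝ ({x (N + 5), y (N + 5)} : Set V)) :=
        FiniteDimensional.span_of_finite ℝ (Set.toFinite _)
      rw [hJsucc N, hadd _ _ (finJ N) inferInstance (hJle N), ih, hq2 (N + 5) (by omega)]
      push_cast
      ring
  have hbound : ∀ N : ℕ, (N : ℝ) * q ≤ 1 := by
    intro N
    rw [← hJmu N]
    exact hone (J N) (finJ N)
  have hq0 : 0 ≤ q := hpos _
  rcases eq_or_lt_of_le hq0 with h | h
  · rw [hq1, ← h]
  · exfalso
    obtain ⟨N, hN⟩ := exists_nat_gt (1 / q)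
    have := hbound N
    have h1q : 1 / q * q = 1 := by field_simp
    nlinarith

lemma aux_muFinDim {V : Type*} [AddCommGroup V] [Module ℝ V]
    (σ : V →ₗ[ℝ] V →ₗ[ℝ] ℝ) (halt : ∀ v, σ v v = 0) (μ : Submodule ℝ V → ℝ)
    (hpos : ∀ A : Submodule ℝ V, 0 ≤ μ A)
    (hone : ∀ A : Submodule ℝ V, FiniteDimensional ℝ A → μ A ≤ 1)
    (hadd : ∀ A B : Submodule ℝ V, FiniteDimensional ℝ A → FiniteDimensional ℝ B →
      A ≤ sC σ B → μ (A ⊔ B) = μ A + μ B)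
    (hmono : ∀ A B : Submodule ℝ V, FiniteDimensional ℝ A → FiniteDimensional ℝ B →
      A ≤ B → μ A ≤ μ B)
    (x y : ℕ → V) (hxy1 : ∀ n, σ (x n) (y n) = 1)
    (horth : ∀ n m, n ≠ m → σ (x n) (x m) = 0 ∧ σ (x n) (y m) = 0 ∧
      σ (y n) (x m) = 0 ∧ σ (y n) (y m) = 0) :
    ∀ A : Submodule ℝ V, FiniteDimensional ℝ A → μ A = 0 := by
  have hs := aux_skew σ halt
  suffices h : ∀ n : ℕ, ∀ A : Submodule ℝ V, FiniteDimensional ℝ A → finrank ℝ A ≤ n → μ A = 0 by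
    intro A hA
    exact h (finrank ℝ A) A hA le_rfl
  intro n
  induction n with
  | zero =>
    intro A hA hr
    haveI := hA
    have : A = ⊥ := Submodule.finrank_eq_zero.mp (Nat.le_zero.mp hr)
    rw [this]
    exact aux_mu_bot σ μ hadd
  | succ n ih =>
    intro A hA hr
    haveI := hA
    by_cases hiso : A ≤ sC σ A
    · exact aux_iso_zero σ μ hadd A hA hiso
    · -- find a symplectic pair inside A
      obtain ⟨z, hzA, hz⟩ := SetLike.not_le_iff_exists.mp hiso
      have hz' : ¬ ∀ a ∈ A, σ z a = 0 := hz
      push_neg at hz'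
      obtain ⟨yy, hyA, hzy⟩ := hz'
      set s := σ z yy with hsdef
      set P := span ℝ ({z, yy} : Set V) with hP
      haveI : FiniteDimensional ℝ P := FiniteDimensional.span_of_finite ℝ (Set.toFinite _)
      have hPA : P ≤ A := by
        rw [hP, span_le]
        rintro p (rfl | rfl)
        · exact hzA
        · exact hyA
      set A₀ := A ⊓ sC σ P with hA₀
      haveI : FiniteDimensional ℝ A₀ := Submodule.finiteDimensional_of_le inf_le_left
      -- A = A₀ ⊔ P
      have hdecomp : A = A₀ ⊔ P := by
        apply le_antisymm
        · intro a ha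
          set p : V := (σ a yy / s) • z + (-(σ a z) / s) • yy with hp
          have hpP : p ∈ P := add_mem (smul_mem _ _ (subset_span (Set.mem_insert _ _)))
            (smul_mem _ _ (subset_span (Set.mem_insert_of_mem _ rfl)))
          have ha₀ : a - p ∈ A₀ := by
            constructor
            · exact sub_mem ha (hPA hpP)
            · show ∀ b ∈ P, σ (a - p) b = 0
              have key1 : σ (a - p) z = 0 := by
                simp only [hp, map_sub, map_add, map_smul, LinearMap.sub_apply,
                  LinearMap.add_apply, LinearMap.smul_apply, smul_eq_mul, halt,
                  hs yy z, ← hsdef]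
                field_simp
                ring
              have key2 : σ (a - p) yy = 0 := by
                simp only [hp, map_sub, map_add, map_smul, LinearMap.sub_apply,
                  LinearMap.add_apply, LinearMap.smul_apply, smul_eq_mul, halt,
                  ← hsdef]
                field_simp
                ring
              intro b hb
              rw [hP] at hb
              have : span ℝ ({z, yy} : Set V) ≤ LinearMap.ker (σ (a - p)) := by
                rw [span_le]
                rintro r (rfl | rfl)
                · exact key1
                · exact key2
              exact this hb
          have : a = (a - p) + p := by abel
          rw [this]
          exact add_mem_sup ha₀ hpP
        · exact sup_le inf_le_left hPA
      -- A₀ ⊓ P = ⊥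
      have hinf : A₀ ⊓ P = ⊥ := by
        rw [eq_bot_iff]
        rintro r ⟨⟨_, hrsC⟩, hrP⟩
        rw [hP] at hrP
        obtain ⟨cc, dd, hcd⟩ := Submodule.mem_span_pair.mp hrP
        have hrz : σ r z = 0 := hrsC z (subset_span (Set.mem_insert _ _))
        have hry : σ r yy = 0 := hrsC yy (subset_span (Set.mem_insert_of_mem _ rfl))
        rw [← hcd] at hrz hry
        simp only [map_add, map_smul, LinearMap.add_apply, LinearMap.smul_apply,
          smul_eq_mul, halt, hs yy z, ← hsdef, mul_zero, zero_add, add_zero,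
          mul_neg] at hrz hry
        have hdd : dd = 0 := by
          rcases mul_eq_zero.mp (neg_eq_zero.mp hrz) with h | h
          · exact h
          · exact absurd h hzy
        have hcc : cc = 0 := by
          rcases mul_eq_zero.mp hry with h | h
          · exact h
          · exact absurd h hzy
        rw [Submodule.mem_bot, ← hcd, hdd, hcc]
        simp
      -- rank comparison
      have hrank := Submodule.finrank_sup_add_finrank_inf_eq A₀ P
      rw [← hdecomp, hinf, finrank_bot, add_zero] at hrank
      have hPpos : 0 < finrank ℝ P := by
        rcases Nat.eq_zero_or_pos (finrank ℝ P) with h0 | h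
        · exfalso
          have : P = ⊥ := Submodule.finrank_eq_zero.mp h0
          have hzP : z ∈ P := subset_span (Set.mem_insert _ _)
          rw [this, Submodule.mem_bot] at hzP
          apply hzy
          rw [hsdef, hzP]
          simp
        · exact h
      have hA₀rank : finrank ℝ A₀ ≤ n := by omega
      -- conclude
      have hμP : μ P = 0 :=
        aux_muPlane σ halt μ hpos hone hadd hmono x y hxy1 horth z yy hzy
      have hμA₀ : μ A₀ = 0 := ih A₀ inferInstance hA₀rank
      rw [hdecomp, hadd A₀ P inferInstance inferInstance inf_le_right, hμP, hμA₀, add_zero]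

lemma aux_plane_basis {V : Type*} [AddCommGroup V] [Module ℝ V]
    (σ : V →ₗ[ℝ] V →ₗ[ℝ] ℝ) (halt : ∀ v, σ v v = 0)
    (F : Submodule ℝ V) (hfr : finrank ℝ F = 2) (hnd : F ⊓ sC σ F = ⊥) :
    ∃ xv yv : V, F = span ℝ ({xv, yv} : Set V) ∧ σ xv yv = 1 := by
  haveI : Module.Finite ℝ F := Module.finite_of_finrank_pos (by rw [hfr]; norm_num)
  let b := Module.finBasisOfFinrankEq ℝ F hfr
  set xv : V := (b 0 : V) with hx
  set yv : V := (b 1 : V) with hy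
  have hspan : F = span ℝ ({xv, yv} : Set V) := by
    apply le_antisymm
    · intro z hz
      have hrepr := b.sum_repr ⟨z, hz⟩
      rw [Fin.sum_univ_two] at hrepr
      have hco := congrArg (Subtype.val : F → V) hrepr
      simp only [Submodule.coe_add, SetLike.val_smul] at hco
      rw [← hco]
      exact add_mem (smul_mem _ _ (subset_span (Set.mem_insert _ _)))
        (smul_mem _ _ (subset_span (Set.mem_insert_of_mem _ rfl)))
    · rw [span_le]
      rintro p (rfl | rfl)
      · exact (b 0).2
      · exact (b 1).2
  have hsne : σ xv yv ≠ 0 := by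
    intro h0
    have hiso : F ≤ sC σ F := by
      rw [hspan]
      apply aux_le_sC_span
      rintro p (rfl | rfl) r (rfl | rfl)
      · exact halt _
      · exact h0
      · rw [aux_skew σ halt, h0, neg_zero]
      · exact halt _
    have : F = ⊥ := by rw [← hnd, inf_eq_left.mpr hiso]
    rw [this] at hfr
    rw [finrank_bot] at hfr
    exact two_ne_zero hfr.symm
  refine ⟨xv, (σ xv yv)⁻¹ • yv, ?_, ?_⟩
  · rw [hspan, aux_span_pair_smul (inv_ne_zero hsne)]
  · rw [map_smul, smul_eq_mul, inv_mul_cancel₀ hsne]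

lemma aux_part1 :
    ∀ (V : Type) (_ : AddCommGroup V), ∀ (_ : Module ℝ V),
      ∀ σ : V →ₗ[ℝ] V →ₗ[ℝ] ℝ,
      (∀ v : V, σ v v = 0) →
      (∀ v : V, (∀ w : V, σ v w = 0) → v = 0) →
      ∀ F : ℕ → Submodule ℝ V,
        (∀ n, Module.finrank ℝ (F n) = 2) →
        (∀ n, F n ⊓ sC σ (F n) = ⊥) →
        (∀ n m, n ≠ m → F n ≤ sC σ (F m)) →
      ∀ μ : Submodule ℝ V → ℝ,
        (∀ A : Submodule ℝ V, 0 ≤ μ A ∧ μ A ≤ 1) →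
        μ ⊥ = 0 → μ ⊤ = 1 →
        (∀ A B : Submodule ℝ V, A ≤ B → μ A ≤ μ B) →
        (∀ A B : Submodule ℝ V, A ≤ sC σ B → μ (A ⊔ B) = μ A + μ B) →
      ∀ A : Submodule ℝ V, FiniteDimensional ℝ A → μ A = 0 := by
  intro V hAG hMod σ halt _ F hfr hnd horthF μ hbound _ _ hmono hadd A hA
  have key : ∀ n, ∃ xv yv : V, F n = span ℝ ({xv, yv} : Set V) ∧ σ xv yv = 1 :=
    fun n => aux_plane_basis σ halt (F n) (hfr n) (hnd n)
  choose x y hspan hxy1 using key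
  have hmemx : ∀ n, x n ∈ F n := fun n => by
    rw [hspan n]; exact subset_span (Set.mem_insert _ _)
  have hmemy : ∀ n, y n ∈ F n := fun n => by
    rw [hspan n]; exact subset_span (Set.mem_insert_of_mem _ rfl)
  have horth : ∀ n m, n ≠ m → σ (x n) (x m) = 0 ∧ σ (x n) (y m) = 0 ∧
      σ (y n) (x m) = 0 ∧ σ (y n) (y m) = 0 := by
    intro n m hnm
    have h := horthF n m hnm
    exact ⟨h (hmemx n) (x m) (hmemx m), h (hmemx n) (y m) (hmemy m),
      h (hmemy n) (x m) (hmemx m), h (hmemy n) (y m) (hmemy m)⟩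
  exact aux_muFinDim σ halt μ (fun A => (hbound A).1) (fun A _ => (hbound A).2)
    (fun A B _ _ h => hadd A B h) (fun A B _ _ h => hmono A B h)
    x y hxy1 horth A hA

noncomputable def sigmaH {H : Type*} [NormedAddCommGroup H] [InnerProductSpace ℂ H] :
    H →ₗ[ℝ] H →ₗ[ℝ] ℝ :=
  LinearMap.mk₂ ℝ (fun v w => (inner ℂ v w : ℂ).im)
    (fun x y z => by rw [inner_add_left]; exact Complex.add_im _ _)
    (fun r x y => by
      rw [← Complex.coe_smul, inner_smul_left, Complex.conj_ofReal]
      simp [Complex.mul_im])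
    (fun x y z => by rw [inner_add_right]; exact Complex.add_im _ _)
    (fun r x y => by
      rw [← Complex.coe_smul, inner_smul_right]
      simp [Complex.mul_im])

lemma sigmaH_apply {H : Type*} [NormedAddCommGroup H] [InnerProductSpace ℂ H] (v w : H) :
    sigmaH v w = (inner ℂ v w : ℂ).im := rfl

lemma sigmaH_alt {H : Type*} [NormedAddCommGroup H] [InnerProductSpace ℂ H] (v : H) :
    sigmaH v v = 0 := by
  rw [sigmaH_apply]
  exact inner_self_im (𝕜 := ℂ) v

lemma sC_sigmaH {H : Type*} [NormedAddCommGroup H] [InnerProductSpace ℂ H]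
    (K : Submodule ℝ H) : sC sigmaH K = sympSub K := rfl

lemma sympSub_bot {H : Type*} [NormedAddCommGroup H] [InnerProductSpace ℂ H]
    (K : Submodule ℝ H) : K ≤ sympSub ⊥ := by
  intro ξ _ h hh
  rw [Submodule.mem_bot] at hh
  rw [hh, inner_zero_right]
  simp

lemma aux_onseq (H : Type*) [NormedAddCommGroup H] [InnerProductSpace ℂ H]
    [CompleteSpace H] [TopologicalSpace.SeparableSpace H]
    (hinf : ¬ FiniteDimensional ℂ H) :
    ∃ e : ℕ → H, (∀ n m : ℕ, (inner ℂ (e n) (e m) : ℂ) = if n = m then 1 else 0) ∧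
      (Submodule.span ℂ (Set.range e)).topologicalClosure = ⊤ := by
  classical
  obtain ⟨w, b, -⟩ := exists_hilbertBasis ℂ H
  have hbo := orthonormal_iff_ite.mp b.orthonormal
  have hnorm : ∀ i : ↥w, ‖b i‖ = 1 := by
    intro i
    have := hbo i i
    rw [if_pos rfl] at this
    have h2 : ‖b i‖ ^ 2 = 1 := by
      rw [← inner_self_eq_norm_sq (𝕜 := ℂ), this]
      simp
    nlinarith [norm_nonneg (b i)]
  haveI hcw : Countable ↥w := by
    apply Pairwise.countable_of_isOpen_disjoint (s := fun i : ↥w => Metric.ball (b i) (1/2))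
    · intro i j hij
      apply Metric.ball_disjoint_ball
      have h0 : (inner ℂ (b i) (b j) : ℂ) = 0 := by
        rw [hbo i j, if_neg hij]
      have hsq : ‖b i - b j‖ ^ 2 = 2 := by
        rw [@norm_sub_sq ℂ, h0, hnorm i, hnorm j]
        norm_num
      have hd : dist (b i) (b j) = ‖b i - b j‖ := dist_eq_norm _ _
      have : (1 : ℝ) ≤ dist (b i) (b j) := by
        rw [hd]
        nlinarith [norm_nonneg (b i - b j)]
      linarith
    · intro i
      exact Metric.isOpen_ball
    · intro i
      exact Metric.nonempty_ball.mpr (by norm_num)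
  haveI hiw : Infinite ↥w := by
    by_contra hfin
    rw [not_infinite_iff_finite] at hfin
    apply hinf
    have hran : (Set.range ⇑b).Finite := Set.finite_range _
    haveI hfd : FiniteDimensional ℂ (span ℂ (Set.range ⇑b)) :=
      FiniteDimensional.span_of_finite ℂ hran
    have hcl : (span ℂ (Set.range ⇑b)).topologicalClosure = span ℂ (Set.range ⇑b) :=
      IsClosed.submodule_topologicalClosure_eq (Submodule.closed_of_finiteDimensional _)
    have hd := b.dense_span
    rw [hcl] at hd
    rw [hd] at hfd
    exact Submodule.topEquiv.finiteDimensional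
  haveI : Encodable ↥w := Encodable.ofCountable _
  haveI : Denumerable ↥w := Denumerable.ofEncodableOfInfinite _
  set eqv : ℕ ≃ ↥w := (Denumerable.eqv ↥w).symm with heqv
  refine ⟨fun n => b (eqv n), ?_, ?_⟩
  · intro n m
    rw [hbo (eqv n) (eqv m)]
    by_cases h : n = m
    · rw [if_pos h, if_pos (by rw [h])]
    · rw [if_neg h, if_neg (fun hc => h (eqv.injective hc))]
  · have hr : Set.range (fun n => b (eqv n)) = Set.range ⇑b := by
      exact Function.Surjective.range_comp eqv.surjective ⇑b
    rw [hr]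
    exact b.dense_span

lemma aux_part2 :
    ∀ (H : Type) (_ : NormedAddCommGroup H), ∀ (_ : InnerProductSpace ℂ H),
      ∀ (_ : CompleteSpace H) (_ : TopologicalSpace.SeparableSpace H),
      ¬ FiniteDimensional ℂ H →
      ¬ ∃ μ : Submodule ℝ H → ℝ,
        (∀ K : Submodule ℝ H, 0 ≤ μ K ∧ μ K ≤ 1) ∧
        μ ⊥ = 0 ∧ μ ⊤ = 1 ∧
        (∀ A B : Submodule ℝ H, IsClosed (A : Set H) → IsClosed (B : Set H) →
          A ≤ B → μ A ≤ μ B) ∧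
        (∀ A : ℕ → Submodule ℝ H, (∀ n, IsClosed (A n : Set H)) →
          (∀ n m, n ≠ m → A n ≤ sympSub (A m)) →
          μ ((⨆ n, A n).topologicalClosure) = ∑' n, μ (A n)) := by
  classical
  rintro H _ _ _ _ hinf ⟨μ, hbound, hbot, htop, hmono, hcadd⟩
  obtain ⟨e, he, hdense⟩ := aux_onseq H hinf
  set x : ℕ → H := e with hx
  set y : ℕ → H := fun n => Complex.I • e n with hy
  set A : ℕ → Submodule ℝ H := fun n => span ℝ ({x n, y n} : Set H) with hA
  haveI finA : ∀ n, FiniteDimensional ℝ (A n) :=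
    fun n => FiniteDimensional.span_of_finite ℝ (Set.toFinite _)
  have hAcl : ∀ n, IsClosed ((A n : Submodule ℝ H) : Set H) := by
    intro n
    haveI := finA n
    exact Submodule.closed_of_finiteDimensional _
  -- symplectic facts
  have hxy1 : ∀ n, sigmaH (x n) (y n) = 1 := by
    intro n
    rw [sigmaH_apply, hy]
    simp only [hx]
    rw [inner_smul_right, he n n, if_pos rfl, mul_one, Complex.I_im]
  have horth : ∀ n m, n ≠ m → sigmaH (x n) (x m) = 0 ∧ sigmaH (x n) (y m) = 0 ∧
      sigmaH (y n) (x m) = 0 ∧ sigmaH (y n) (y m) = 0 := by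
    intro n m hnm
    have h0 : (inner ℂ (e n) (e m) : ℂ) = 0 := by rw [he n m, if_neg hnm]
    refine ⟨?_, ?_, ?_, ?_⟩ <;> rw [sigmaH_apply] <;> simp only [hx, hy]
    · rw [h0]; simp
    · rw [inner_smul_right, h0]; simp
    · rw [inner_smul_left, h0]; simp
    · rw [inner_smul_left, inner_smul_right, h0]; simp
  -- measure-theoretic facts
  have hpos : ∀ K : Submodule ℝ H, 0 ≤ μ K := fun K => (hbound K).1
  have hone : ∀ K : Submodule ℝ H, FiniteDimensional ℝ K → μ K ≤ 1 := by
    intro K hK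
    haveI := hK
    have := hmono K ⊤ (Submodule.closed_of_finiteDimensional _)
      (by rw [Submodule.top_coe]; exact isClosed_univ) le_top
    rw [htop] at this
    exact this
  have hadd2 : ∀ P Q : Submodule ℝ H, FiniteDimensional ℝ P → FiniteDimensional ℝ Q →
      P ≤ sC sigmaH Q → μ (P ⊔ Q) = μ P + μ Q := by
    intro P Q hP hQ hle
    haveI := hP; haveI := hQ
    rw [sC_sigmaH] at hle
    have hQP : Q ≤ sympSub P := by
      intro q hq p hp
      have h1 : (inner ℂ p q : ℂ).im = 0 := hle hp q hq
      rw [← inner_conj_symm]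
      rw [Complex.conj_im, h1, neg_zero]
    set C : ℕ → Submodule ℝ H := fun n => if n = 0 then P else if n = 1 then Q else ⊥ with hC
    have hC0 : C 0 = P := by simp [hC]
    have hC1 : C 1 = Q := by simp [hC]
    have hC2 : ∀ n, C (n + 2) = ⊥ := by intro n; simp [hC]
    have hCcl : ∀ n, IsClosed ((C n : Submodule ℝ H) : Set H) := by
      intro n
      match n with
      | 0 => rw [hC0]; exact Submodule.closed_of_finiteDimensional _
      | 1 => rw [hC1]; exact Submodule.closed_of_finiteDimensional _
      | (n+2) => rw [hC2]; exact Submodule.closed_of_finiteDimensional _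
    have hCorth : ∀ n m, n ≠ m → C n ≤ sympSub (C m) := by
      intro n m hnm
      match n, m with
      | 0, 0 => exact absurd rfl hnm
      | 0, 1 => rw [hC0, hC1]; exact hle
      | 0, (m+2) => rw [hC0, hC2]; exact sympSub_bot P
      | 1, 0 => rw [hC1, hC0]; exact hQP
      | 1, 1 => exact absurd rfl hnm
      | 1, (m+2) => rw [hC1, hC2]; exact sympSub_bot Q
      | (n+2), m => rw [hC2]; exact bot_le
    have hsup : (⨆ n, C n) = P ⊔ Q := by
      apply le_antisymm
      · apply iSup_le
        intro n
        match n with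
        | 0 => rw [hC0]; exact le_sup_left
        | 1 => rw [hC1]; exact le_sup_right
        | (n+2) => rw [hC2]; exact bot_le
      · apply sup_le
        · rw [← hC0]; exact le_iSup C 0
        · rw [← hC1]; exact le_iSup C 1
    have hclosure : (⨆ n, C n).topologicalClosure = P ⊔ Q := by
      rw [hsup]
      exact IsClosed.submodule_topologicalClosure_eq (Submodule.closed_of_finiteDimensional _)
    have htsum : ∑' n, μ (C n) = μ P + μ Q := by
      rw [tsum_eq_sum (s := ({0, 1} : Finset ℕ))]
      · rw [Finset.sum_pair (by norm_num : (0 : ℕ) ≠ 1), hC0, hC1]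
      · intro n hn
        simp only [Finset.mem_insert, Finset.mem_singleton] at hn
        push_neg at hn
        match n, hn with
        | (n+2), _ => rw [hC2]; exact hbot
    have := hcadd C hCcl hCorth
    rw [hclosure, htsum] at this
    exact this
  have hmono2 : ∀ P Q : Submodule ℝ H, FiniteDimensional ℝ P → FiniteDimensional ℝ Q →
      P ≤ Q → μ P ≤ μ Q := by
    intro P Q hP hQ hle
    haveI := hP; haveI := hQ
    exact hmono P Q (Submodule.closed_of_finiteDimensional _)
      (Submodule.closed_of_finiteDimensional _) hle
  -- each plane has measure zero
  have hmuA : ∀ n, μ (A n) = 0 := by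
    intro n
    exact aux_muFinDim sigmaH sigmaH_alt μ hpos hone hadd2 hmono2 x y hxy1 horth (A n) (finA n)
  -- the planes are pairwise symplectically orthogonal
  have hAorth : ∀ n m, n ≠ m → A n ≤ sympSub (A m) := by
    intro n m hnm
    rw [← sC_sigmaH, hA]
    apply aux_le_sC_span
    rintro p (rfl | rfl) r (rfl | rfl)
    · exact (horth n m hnm).1
    · exact (horth n m hnm).2.1
    · exact (horth n m hnm).2.2.1
    · exact (horth n m hnm).2.2.2
  -- ℂ-stability of each A n
  have hstab : ∀ n (c : ℂ) (z : H), z ∈ A n → c • z ∈ A n := by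
    intro n c z hz
    have hgen : ∀ (d : ℂ), d • e n ∈ A n := by
      intro d
      have hdec : d • e n = (d.re : ℝ) • x n + (d.im : ℝ) • y n := by
        simp only [hx, hy]
        rw [← Complex.coe_smul, ← Complex.coe_smul, smul_smul, ← add_smul, Complex.re_add_im]
      rw [hdec]
      exact add_mem (smul_mem _ _ (subset_span (Set.mem_insert _ _)))
        (smul_mem _ _ (subset_span (Set.mem_insert_of_mem _ rfl)))
    rw [hA] at hz
    induction hz using Submodule.span_induction with
    | mem p hp =>
      rcases hp with rfl | rfl
      · exact hgen c
      · show c • (Complex.I • e n) ∈ A n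
        rw [smul_smul]
        exact hgen (c * Complex.I)
    | zero => rw [smul_zero]; exact zero_mem _
    | add p q _ _ hp hq => rw [smul_add]; exact add_mem hp hq
    | smul r p _ hp => rw [smul_comm]; exact smul_mem _ r hp
  -- density of the join
  have hTop : (⨆ n, A n).topologicalClosure = ⊤ := by
    rw [← Submodule.dense_iff_topologicalClosure_eq_top]
    have hd : Dense ((span ℂ (Set.range e) : Submodule ℂ H) : Set H) :=
      Submodule.dense_iff_topologicalClosure_eq_top.mpr hdense
    apply Dense.mono _ hd
    intro z hz
    show z ∈ (⨆ n, A n)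
    induction hz using Submodule.span_induction with
    | mem p hp =>
      obtain ⟨n, rfl⟩ := hp
      exact Submodule.mem_iSup_of_mem n (subset_span (Set.mem_insert _ _))
    | zero => exact zero_mem _
    | add p q _ _ hp hq => exact add_mem hp hq
    | smul c p _ hp =>
      refine Submodule.iSup_induction A (motive := fun t => c • t ∈ ⨆ n, A n) hp ?_ ?_ ?_
      · intro n t ht
        exact Submodule.mem_iSup_of_mem n (hstab n c t ht)
      · show c • (0 : H) ∈ ⨆ n, A n
        rw [smul_zero]; exact zero_mem _
      · intro s t hs ht
        show c • (s + t) ∈ ⨆ n, A n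
        rw [smul_add]; exact add_mem hs ht
  -- conclusion
  have hfin := hcadd A hAcl hAorth
  rw [hTop, htop] at hfin
  have : ∑' n, μ (A n) = 0 := by
    have : (fun n => μ (A n)) = fun n => 0 := funext fun n => hmuA n
    rw [this, tsum_zero]
  rw [this] at hfin
  exact one_ne_zero hfin

/-- (1) In an infinite-dimensional real symplectic vector space containing an infinite
sequence of pairwise symplectically orthogonal symplectic planes, every finitely additive
probability measure on the subspace lattice vanishes on all finite-dimensional subspaces.
(2) Consequently, on a separable infinite-dimensional complex Hilbert space there is no
countably additive probability measure on the lattice of closed real subspaces with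
symplectic complementation. -/
theorem stmt_19 :
    (∀ (V : Type) (_ : AddCommGroup V), ∀ (_ : Module ℝ V),
      ∀ σ : V →ₗ[ℝ] V →ₗ[ℝ] ℝ,
      (∀ v : V, σ v v = 0) →
      (∀ v : V, (∀ w : V, σ v w = 0) → v = 0) →
      ∀ F : ℕ → Submodule ℝ V,
        (∀ n, Module.finrank ℝ (F n) = 2) →
        (∀ n, F n ⊓ sC σ (F n) = ⊥) →
        (∀ n m, n ≠ m → F n ≤ sC σ (F m)) →
      ∀ μ : Submodule ℝ V → ℝ,
        (∀ A : Submodule ℝ V, 0 ≤ μ A ∧ μ A ≤ 1) →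
        μ ⊥ = 0 → μ ⊤ = 1 →
        (∀ A B : Submodule ℝ V, A ≤ B → μ A ≤ μ B) →
        (∀ A B : Submodule ℝ V, A ≤ sC σ B → μ (A ⊔ B) = μ A + μ B) →
      ∀ A : Submodule ℝ V, FiniteDimensional ℝ A → μ A = 0) ∧
    (∀ (H : Type) (_ : NormedAddCommGroup H), ∀ (_ : InnerProductSpace ℂ H),
      ∀ (_ : CompleteSpace H) (_ : TopologicalSpace.SeparableSpace H),
      ¬ FiniteDimensional ℂ H →
      ¬ ∃ μ : Submodule ℝ H → ℝ,
        (∀ K : Submodule ℝ H, 0 ≤ μ K ∧ μ K ≤ 1) ∧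
        μ ⊥ = 0 ∧ μ ⊤ = 1 ∧
        (∀ A B : Submodule ℝ H, IsClosed (A : Set H) → IsClosed (B : Set H) →
          A ≤ B → μ A ≤ μ B) ∧
        (∀ A : ℕ → Submodule ℝ H, (∀ n, IsClosed (A n : Set H)) →
          (∀ n m, n ≠ m → A n ≤ sympSub (A m)) →
          μ ((⨆ n, A n).topologicalClosure) = ∑' n, μ (A n))) :=
  ⟨aux_part1, aux_part2⟩
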